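/- arXiv:1410.0715 — 4 statements merged into one kernel-verified Lean document; each statement's English description precedes it below -/
import Mathlib

section
/- Let X be a barreled locally convex topological vector space and Y a complete Hausdorff locally convex space, and let {F_t : X → Y}_{t∈J} be continuous linear maps indexed by an open interval J such that for every x ∈ X the map t ↦ F_t(x) is smooth. Then for each n and each compact K ⊂ J, the family of n-th derivative maps {F_t^{(n)} : X → Y}_{t∈K} is equicontinuous, and each F_t^{(n)} is a continuous linear map. -/
open Filter

/-- Let `X` be a barreled locally convex space, `Y` a complete Hausdorff locally
convex space, and `{F_t : X → Y}` continuous linear maps indexed by an open interval `J` such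
that for every `x` the map `t ↦ F_t x` is smooth (all iterated derivatives `D n t x` exist as
limits of difference quotients, for `t ∈ J`).  Then for each `n`, each `D n t` (`t ∈ J`) is a
continuous linear map, and for each compact `K ⊆ J` the family `{D n t}_{t ∈ K}` is
equicontinuous. -/
theorem stmt1 {X Y : Type*}
    [AddCommGroup X] [Module ℝ X] [TopologicalSpace X] [IsTopologicalAddGroup X]
    [ContinuousSMul ℝ X] [LocallyConvexSpace ℝ X] [BarrelledSpace ℝ X]
    [AddCommGroup Y] [Module ℝ Y] [UniformSpace Y] [IsUniformAddGroup Y]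
    [ContinuousSMul ℝ Y] [LocallyConvexSpace ℝ Y] [CompleteSpace Y] [T2Space Y]
    (J : Set ℝ) (hJopen : IsOpen J) (hJconn : J.OrdConnected) (hJne : J.Nonempty)
    (F : ℝ → X →L[ℝ] Y)
    (D : ℕ → ℝ → X → Y)
    (hD0 : ∀ t x, D 0 t x = F t x)
    (hDderiv : ∀ n : ℕ, ∀ t ∈ J, ∀ x : X,
      Tendsto (fun h : ℝ => h⁻¹ • (D n (t + h) x - D n t x))
        (nhdsWithin 0 {(0 : ℝ)}ᶜ) (nhds (D (n + 1) t x))) :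
    ∀ n : ℕ,
      (∀ t ∈ J, ∃ L : X →L[ℝ] Y, ∀ x : X, L x = D n t x) ∧
      (∀ K : Set ℝ, K ⊆ J → IsCompact K →
        Equicontinuous (fun t : K => D n t.1)) := by
  classical
  letI : UniformSpace X := IsTopologicalAddGroup.rightUniformSpace X
  haveI : IsUniformAddGroup X := isUniformAddGroup_of_addCommGroup
  have hq : WithSeminorms (gaugeSeminormFamily ℝ Y) := with_gaugeSeminormFamily
  set q := gaugeSeminormFamily ℝ Y with hqdef
  -- continuity of `t ↦ D n t x` at points of `J`
  have hcont : ∀ (n : ℕ) (x : X), ∀ t ∈ J, ContinuousAt (fun s => D n s x) t := by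
    intro n x t ht
    have h2 : Tendsto (fun h : ℝ => h • (h⁻¹ • (D n (t + h) x - D n t x)))
        (nhdsWithin 0 {(0:ℝ)}ᶜ) (nhds ((0:ℝ) • D (n+1) t x)) :=
      (tendsto_id.mono_left nhdsWithin_le_nhds).smul (hDderiv n t ht x)
    rw [zero_smul] at h2
    have h3 : Tendsto (fun h : ℝ => D n (t+h) x - D n t x)
        (nhdsWithin 0 {(0:ℝ)}ᶜ) (nhds 0) := by
      refine h2.congr' ?_
      filter_upwards [self_mem_nhdsWithin] with h hh
      rw [smul_inv_smul₀ hh]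
    have h4 : Tendsto (fun h : ℝ => D n (t+h) x)
        (nhdsWithin 0 {(0:ℝ)}ᶜ) (nhds (D n t x)) := by
      have := h3.add (tendsto_const_nhds (x := D n t x))
      simpa using this
    have h5 : Tendsto (fun h : ℝ => D n (t+h) x) (nhds 0) (nhds (D n t x)) := by
      rw [← nhdsNE_sup_pure (0:ℝ), tendsto_sup]
      refine ⟨h4, ?_⟩
      have := tendsto_pure_nhds (fun h : ℝ => D n (t+h) x) 0
      simpa using this
    have : Tendsto (fun s : ℝ => D n s x) (nhds t) (nhds (D n t x)) := by
      rw [← map_add_left_nhds_zero t, tendsto_map'_iff]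
      exact h5
    exact this
  -- Part 1 by induction
  have hlin : ∀ n : ℕ, ∀ t ∈ J, ∃ L : X →L[ℝ] Y, ∀ x : X, L x = D n t x := by
    intro n
    induction n with
    | zero => exact fun t ht => ⟨F t, fun x => (hD0 t x).symm⟩
    | succ n ih =>
      intro t ht
      choose! L hL using ih
      rcases Metric.isOpen_iff.mp hJopen t ht with ⟨ε, hε, hball⟩
      set l : Filter ℝ := nhdsWithin 0 (Set.Ioo (0:ℝ) ε) with hldef
      haveI : l.NeBot := left_nhdsWithin_Ioo_neBot hε
      have hle : l ≤ nhdsWithin 0 {(0:ℝ)}ᶜ :=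
        nhdsWithin_mono 0 (fun h hh => ne_of_gt hh.1)
      set g : ℝ → X →L[ℝ] Y := fun h => h⁻¹ • (L (t+h) - L t) with hgdef
      have htendsto : Tendsto (fun h x => g h x) l (nhds (fun x => D (n+1) t x)) := by
        rw [tendsto_pi_nhds]
        intro x
        refine Tendsto.congr' ?_ ((hDderiv n t ht x).mono_left hle)
        filter_upwards [self_mem_nhdsWithin] with h hh
        have hJh : t + h ∈ J := by
          apply hball
          rw [Metric.mem_ball, Real.dist_eq]
          simpa [abs_of_pos hh.1] using hh.2
        simp only [hgdef, ContinuousLinearMap.smul_apply, ContinuousLinearMap.sub_apply,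
          hL (t+h) hJh x, hL t ht x]
      exact ⟨hq.continuousLinearMapOfTendsto g htendsto, fun x => rfl⟩
  refine fun n => ⟨hlin n, ?_⟩
  intro K hKJ hK
  choose! L hL using hlin n
  have key : UniformEquicontinuous ((↑) ∘ fun t : K => L t.1) := by
    refine hq.banach_steinhaus ?_
    intro k x
    have hcs : ContinuousOn (fun s => q k (D n s x)) J :=
      (hq.continuous_seminorm k).comp_continuousOn
        (fun t ht => (hcont n x t ht).continuousWithinAt)
    have himg : IsCompact ((fun s => q k (D n s x)) '' K) :=
      hK.image_of_continuousOn (hcs.mono hKJ)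
    have hbdd := himg.bddAbove
    have h1 : BddAbove (Set.range fun i : K => q k (D n i.1 x)) := by
      have h2 := hbdd
      rw [Set.image_eq_range] at h2
      simpa using h2
    have heq : ∀ i : K, q k (L i.1 x) = q k (D n i.1 x) := fun i => by
      rw [hL i.1 (hKJ i.2)]
    simpa only [Function.comp, heq] using h1
  have hfun : (fun t : K => D n t.1) = ((↑) ∘ fun t : K => L t.1) := by
    funext t
    funext x
    exact (hL t.1 (hKJ t.2) x).symm
  rw [hfun]
  exact key.equicontinuous
end

section
/- Let R be a unital commutative topological algebra, A a topological R-algebra, and M = C^∞(J,X) the module of sections of a smooth one-parameter deformation of algebras with algebra of sections A_J. If ∇ and ∇' are two connections on A_J with Hochschild 2-cocycles E = δ∇ and E' = δ∇' (where δ is the Hochschild coboundary), then E − E' = δF for the C^∞(J)-linear map F = ∇ − ∇'; hence the class [E] ∈ H²_{C^∞(J)}(A_J, A_J) is independent of the choice of connection. Moreover [E] = 0 if and only if A_J admits a connection that is a derivation. -/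
/-- Let `R` be a unital commutative (topological) algebra with derivation `d`
(modelling `C^∞(J)` with `f ↦ f'`) and let `A` be an `R`-algebra (modelling the algebra of
sections `A_J` of a smooth deformation).  A connection on `A` is an additive map `∇` with
`∇(r • a) = d r • a + r • ∇ a`; its Hochschild 2-cocycle is `E(a,b) = ∇a·b + a·∇b − ∇(ab)`.
If `∇, ∇'` are two connections with cocycles `E, E'`, then `F := ∇ − ∇'` is `R`-linear and
`E − E' = δF`, so the class `[E] ∈ H²_R(A,A)` is independent of the connection; moreover
`[E] = 0` (i.e. `E = δF` for some `R`-linear `F`) iff `A` admits a connection that is a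
derivation. -/
theorem stmt6 {R A : Type*} [CommRing R] [Ring A] [Algebra R A]
    (d : R → R) (hd_add : ∀ r s : R, d (r + s) = d r + d s)
    (hd_mul : ∀ r s : R, d (r * s) = d r * s + r * d s)
    (Del Del' : A → A)
    (hadd : ∀ a b : A, Del (a + b) = Del a + Del b)
    (hadd' : ∀ a b : A, Del' (a + b) = Del' a + Del' b)
    (hleib : ∀ (r : R) (a : A), Del (r • a) = d r • a + r • Del a)
    (hleib' : ∀ (r : R) (a : A), Del' (r • a) = d r • a + r • Del' a) :
    (IsLinearMap R (fun a => Del a - Del' a)) ∧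
    (∀ a b : A,
      (Del a * b + a * Del b - Del (a * b)) - (Del' a * b + a * Del' b - Del' (a * b))
        = a * (Del b - Del' b) - (Del (a * b) - Del' (a * b)) + (Del a - Del' a) * b) ∧
    ((∃ F : A →ₗ[R] A, ∀ a b : A,
        Del a * b + a * Del b - Del (a * b) = a * F b - F (a * b) + F a * b) ↔
      (∃ D : A → A, (∀ a b : A, D (a + b) = D a + D b) ∧
        (∀ (r : R) (a : A), D (r • a) = d r • a + r • D a) ∧
        (∀ a b : A, D (a * b) = D a * b + a * D b))) := by
  refine ⟨⟨fun a b => by simp only [hadd, hadd']; abel,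
    fun r a => by simp only [hleib, hleib', smul_sub]; abel⟩,
    fun a b => by simp only [mul_sub, sub_mul]; abel, ?_⟩
  constructor
  · rintro ⟨F, hF⟩
    refine ⟨fun a => Del a - F a, fun a b => by simp only [hadd, map_add]; abel, fun r a => by
      simp only [hleib, map_smul, smul_sub]; abel, fun a b => ?_⟩
    have h2 : Del (a * b) = Del a * b + a * Del b - (a * F b - F (a * b) + F a * b) := by
      rw [← hF a b]; abel
    show Del (a * b) - F (a * b) = (Del a - F a) * b + a * (Del b - F b)
    rw [h2]
    simp only [mul_sub, sub_mul]
    abel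
  · rintro ⟨D, hDadd, hDleib, hDder⟩
    refine ⟨{ toFun := fun a => Del a - D a,
              map_add' := fun a b => by simp only [hadd, hDadd]; abel,
              map_smul' := fun r a => by
                simp only [hleib, hDleib, smul_sub, RingHom.id_apply]; abel },
      fun a b => ?_⟩
    simp only [LinearMap.coe_mk, AddHom.coe_mk, hDder, mul_sub, sub_mul]
    abel
end

section
/- Let (C•, d) be a cochain complex of modules over a commutative ring R equipped with a degree-0 map ∇ on each C^n satisfying the connection Leibniz rule over C^∞(J) (or over any R with derivation), and set G := [d,∇] = d∇ − ∇d. Then G is R-linear (i.e. commutes with the module action) and [d,G] = 0, so G is a 1-cocycle in the endomorphism complex End_R(C). Moreover its cohomology class [G] ∈ H¹(End_R(C)) is independent of the choice of connection ∇, and [G] = 0 if and only if C admits a connection that is a chain map. -/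
/-- Let `R` be a commutative ring with derivation `d` (modelling `C^∞(J)` with
`f ↦ f'`), and `(C•, dC)` a cochain complex of `R`-modules.  A connection on `C•` is a family
of additive maps `∇ⁿ : Cⁿ → Cⁿ` with `∇(r • x) = d r • x + r • ∇ x`.  Set
`G = [dC, ∇] = dC∇ − ∇dC`.  Then `G` is `R`-linear and `[dC, G] = 0`, i.e. `G` is a 1-cocycle
in the endomorphism complex; the class `[G]` is independent of `∇` (the difference of the
cocycles of two connections is the coboundary of the `R`-linear map `∇ − ∇'`), and `[G] = 0`
iff `C•` admits a connection which is a chain map. -/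
theorem stmt7 {R : Type*} [CommRing R] {C : ℤ → Type*}
    [∀ n, AddCommGroup (C n)] [∀ n, Module R (C n)]
    (d : R → R) (hd_add : ∀ r s : R, d (r + s) = d r + d s)
    (hd_mul : ∀ r s : R, d (r * s) = d r * s + r * d s)
    (dC : ∀ n : ℤ, C n →ₗ[R] C (n + 1))
    (hdd : ∀ (n : ℤ) (x : C n), dC (n + 1) (dC n x) = 0)
    (Del Del' : ∀ n : ℤ, C n → C n)
    (hadd : ∀ (n : ℤ) (x y : C n), Del n (x + y) = Del n x + Del n y)
    (hadd' : ∀ (n : ℤ) (x y : C n), Del' n (x + y) = Del' n x + Del' n y)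
    (hleib : ∀ (n : ℤ) (r : R) (x : C n), Del n (r • x) = d r • x + r • Del n x)
    (hleib' : ∀ (n : ℤ) (r : R) (x : C n), Del' n (r • x) = d r • x + r • Del' n x) :
    (∀ n : ℤ, IsLinearMap R (fun x : C n => dC n (Del n x) - Del (n + 1) (dC n x))) ∧
    (∀ (n : ℤ) (x : C n),
      dC (n + 1) (dC n (Del n x) - Del (n + 1) (dC n x))
        + (dC (n + 1) (Del (n + 1) (dC n x)) - Del (n + 1 + 1) (dC (n + 1) (dC n x))) = 0) ∧
    (∀ (n : ℤ) (x : C n),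
      (dC n (Del n x) - Del (n + 1) (dC n x)) - (dC n (Del' n x) - Del' (n + 1) (dC n x))
        = dC n (Del n x - Del' n x) - (Del (n + 1) (dC n x) - Del' (n + 1) (dC n x))) ∧
    ((∃ F : ∀ n : ℤ, C n →ₗ[R] C n, ∀ (n : ℤ) (x : C n),
        dC n (Del n x) - Del (n + 1) (dC n x) = dC n (F n x) - F (n + 1) (dC n x)) ↔
      (∃ D : ∀ n : ℤ, C n → C n,
        (∀ (n : ℤ) (x y : C n), D n (x + y) = D n x + D n y) ∧
        (∀ (n : ℤ) (r : R) (x : C n), D n (r • x) = d r • x + r • D n x) ∧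
        (∀ (n : ℤ) (x : C n), dC n (D n x) = D (n + 1) (dC n x)))) := by
  have hzero : ∀ (n : ℤ), Del n 0 = 0 := by
    intro n
    have := hadd n 0 0
    simpa using this.symm
  refine ⟨?_, ?_, ?_, ?_⟩
  · intro n
    constructor
    · intro x y
      simp only [hadd, map_add]
      abel
    · intro r x
      simp only [hleib, map_add, map_smul, smul_sub]
      abel
  · intro n x
    rw [hdd, hzero, map_sub, hdd]
    abel
  · intro n x
    rw [map_sub]
    abel
  · constructor
    · rintro ⟨F, hF⟩
      refine ⟨fun n x => Del n x - F n x, ?_, ?_, ?_⟩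
      · intro n x y; simp only [hadd, map_add]; abel
      · intro n r x; simp only [hleib, map_smul, smul_sub]; abel
      · intro n x
        have := hF n x
        simp only [map_sub]
        rw [sub_eq_sub_iff_sub_eq_sub]
        exact this
    · rintro ⟨D, hDadd, hDleib, hDchain⟩
      refine ⟨fun n => IsLinearMap.mk' (fun x => Del n x - D n x) ⟨?_, ?_⟩, ?_⟩
      · intro x y; rw [hadd, hDadd]; abel
      · intro r x; rw [hleib, hDleib, smul_sub]; abel
      · intro n x
        simp only [IsLinearMap.mk'_apply]
        rw [map_sub, hDchain]
        abel
end

section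
/- Let A be a unital associative algebra over a commutative ring k and P ∈ A an idempotent (P² = P). Define the even chain ch P with components (ch P)₀ = P and (ch P)_{2n} = (−1)^n ((2n)!/n!) (P^{⊗(2n+1)} − (1/2) e ⊗ P^{⊗2n}) in the cyclic chain groups C_{2n}(A) = A₊ ⊗ A^{⊗2n}, where e is the unit adjoined in A₊. Then (b+B)(ch P) = 0, i.e. b((ch P)_{2(n+1)}) = −B((ch P)_{2n}) for all n ≥ 0. -/
open scoped TensorProduct
open Finset

/-- The Hochschild/cyclic chain group `C_n(A) = A₊ ⊗ A^{⊗n}` over `k`. -/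
abbrev CycChain (k A : Type*) [CommRing k] [Ring A] [Algebra k A] (n : ℕ) : Type _ :=
  Unitization k A ⊗[k] (PiTensorProduct k (fun _ : Fin n => A))

/-- The elementary chain `a₀ ⊗ f 0 ⊗ ⋯ ⊗ f (n-1)` in `C_n(A)`. -/
noncomputable def elemC (k A : Type*) [CommRing k] [Ring A] [Algebra k A] (n : ℕ)
    (a₀ : Unitization k A) (f : ℕ → A) : CycChain k A n :=
  a₀ ⊗ₜ[k] PiTensorProduct.tprod k (fun i : Fin n => f (i : ℕ))

/-- The value of the Hochschild boundary `b` on the elementary chain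
`a₀ ⊗ f 0 ⊗ ⋯ ⊗ f n` of degree `n+1`:
`b(a₀ ⊗ a₁ ⊗ ⋯ ⊗ a_{n+1}) = Σ (−1)^j (⋯ a_j a_{j+1} ⋯) + (−1)^{n+1} (a_{n+1} a₀) ⊗ ⋯`. -/
noncomputable def bElemF (k A : Type*) [CommRing k] [Ring A] [Algebra k A] (n : ℕ)
    (a₀ : Unitization k A) (f : ℕ → A) : CycChain k A n :=
  elemC k A n (a₀ * Unitization.inr (f 0)) (fun i => f (i + 1))
  + ∑ j ∈ Finset.range n, ((-1 : ℤ) ^ (j + 1)) •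
      elemC k A n a₀
        (fun i => if i < j then f i else if i = j then f j * f (j + 1) else f (i + 1))
  + ((-1 : ℤ) ^ (n + 1)) • elemC k A n (Unitization.inr (f n) * a₀) f

/-- The value of the Connes operator `B` on the elementary chain
`a₀ ⊗ f 0 ⊗ ⋯ ⊗ f (n-1)` of degree `n` (with `a₀ ∈ A`, i.e. using the `A`-component of
`a₀`; `B` vanishes on chains starting with `e`):
`B(a₀ ⊗ ⋯ ⊗ a_n) = Σ_j (−1)^{jn} e ⊗ a_j ⊗ ⋯ ⊗ a_n ⊗ a₀ ⊗ ⋯ ⊗ a_{j-1}`. -/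
noncomputable def BElemF (k A : Type*) [CommRing k] [Ring A] [Algebra k A] (n : ℕ)
    (a₀ : Unitization k A) (f : ℕ → A) : CycChain k A (n + 1) :=
  ∑ j ∈ Finset.range (n + 1), ((-1 : ℤ) ^ (j * n)) •
    elemC k A (n + 1) 1
      (fun i => (fun m => if m = 0 then a₀.snd else f (m - 1)) ((j + i) % (n + 1)))

/-- The Chern character coefficient `(−1)^n (2n)!/n!`. -/
noncomputable def chCoeff (n : ℕ) : ℚ :=
  (-1) ^ n * ((2 * n).factorial : ℚ) / (n.factorial : ℚ)

/-- The part of `(ch P)_{2n}` surviving under `B` (the `e ⊗ P^{⊗2n}` part is killed by `B`):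
for `n = 0` it is `B(P)`, and for `n ≥ 1` it is `(−1)^n ((2n)!/n!) B(P^{⊗(2n+1)})`. -/
noncomputable def chPB (k A : Type*) [CommRing k] [Algebra ℚ k] [Ring A] [Algebra k A]
    (P : A) : (n : ℕ) → CycChain k A (2 * n + 1)
  | 0 => BElemF k A 0 (Unitization.inr P) (fun _ => P)
  | (m + 1) => algebraMap ℚ k (chCoeff (m + 1)) •
      BElemF k A (2 * (m + 1)) (Unitization.inr P) (fun _ => P)

-- auxiliary lemmas
lemma elemC_congr {k A : Type*} [CommRing k] [Ring A] [Algebra k A] {n : ℕ}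
    (a : Unitization k A) {f g : ℕ → A} (h : ∀ i, f i = g i) :
    elemC k A n a f = elemC k A n a g := by
  unfold elemC
  congr 1
  exact congrArg _ (funext fun i => h i)

lemma chCoeff_succ (n : ℕ) : chCoeff (n + 1) / 2 = -((2 * n + 1 : ℚ) * chCoeff n) := by
  unfold chCoeff
  have h1 : 2 * (n + 1) = (2 * n + 1) + 1 := by ring
  rw [h1, Nat.factorial_succ, Nat.factorial_succ, Nat.factorial_succ]
  have hn : (n.factorial : ℚ) ≠ 0 := Nat.cast_ne_zero.mpr n.factorial_ne_zero
  push_cast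
  field_simp
  ring


/-- For an idempotent `P` in a unital `k`-algebra `A` (`k` a commutative
`ℚ`-algebra), the even Chern character chain with components `(ch P)₀ = P` and
`(ch P)_{2n} = (−1)^n ((2n)!/n!) (P^{⊗(2n+1)} − ½ e ⊗ P^{⊗2n})` satisfies
`(b+B)(ch P) = 0`, i.e. `b((ch P)_{2(n+1)}) = −B((ch P)_{2n})` for all `n ≥ 0`. -/
theorem stmt8 {k A : Type*} [CommRing k] [Algebra ℚ k] [Ring A] [Algebra k A]
    (P : A) (hP : P * P = P) :
    ∀ n : ℕ,
      algebraMap ℚ k (chCoeff (n + 1)) •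
          bElemF k A (2 * n + 1) (Unitization.inr P) (fun _ => P)
        - algebraMap ℚ k (chCoeff (n + 1) / 2) •
          bElemF k A (2 * n + 1) 1 (fun _ => P)
        = - chPB k A P n := by
  intro n
  have hinr : (Unitization.inr P : Unitization k A) * Unitization.inr P
      = Unitization.inr P := by rw [← Unitization.inr_mul, hP]
  set X := elemC k A (2 * n + 1) (Unitization.inr P) (fun _ => P) with hX
  set Y := elemC k A (2 * n + 1) (1 : Unitization k A) (fun _ => P) with hY
  have hsum : (∑ j ∈ Finset.range (2 * n + 1), ((-1 : ℤ) ^ (j + 1))) = -1 := by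
    have := neg_one_geom_sum (R := ℤ) (n := 2 * n + 1)
    simp only [pow_succ, pow_mul] at *
    simp_all [Finset.sum_mul, Nat.even_add_one, Nat.not_even_iff_odd]
  have hmid : ∀ j : ℕ,
      elemC k A (2 * n + 1) (Unitization.inr P : Unitization k A)
        (fun i => if i < j then P else if i = j then P * P else P)
      = X := fun j => elemC_congr _ (fun i => by split_ifs <;> simp [hP])
  have hmid1 : ∀ j : ℕ,
      elemC k A (2 * n + 1) (1 : Unitization k A)
        (fun i => if i < j then P else if i = j then P * P else P)
      = Y := fun j => elemC_congr _ (fun i => by split_ifs <;> simp [hP])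
  have hpow : ((-1 : ℤ)) ^ (2 * n + 1 + 1) = 1 := Even.neg_one_pow ⟨n + 1, by ring⟩
  have hb1 : bElemF k A (2 * n + 1) (Unitization.inr P) (fun _ => P)
      = X + (-1 : ℤ) • X + X := by
    unfold bElemF
    simp only [hmid, hinr, ← Finset.sum_smul, hsum, hpow, one_smul, hX]
  have hb2 : bElemF k A (2 * n + 1) (1 : Unitization k A) (fun _ => P)
      = X + (-1 : ℤ) • Y + X := by
    unfold bElemF
    simp only [hmid1, ← Finset.sum_smul, hsum, hpow, one_smul, one_mul, mul_one, hX]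
  have hBpow : ∀ j : ℕ, ((-1 : ℤ)) ^ (j * (2 * n)) = 1 :=
    fun j => Even.neg_one_pow ⟨j * n, by ring⟩
  have hBfun : ∀ j : ℕ,
      elemC k A (2 * n + 1) (1 : Unitization k A)
        (fun i => (fun m => if m = 0 then (Unitization.inr P : Unitization k A).snd
          else (fun _ : ℕ => P) (m - 1)) ((j + i) % (2 * n + 1)))
      = Y := fun j => elemC_congr _ (fun i => by simp)
  have hB : BElemF k A (2 * n) (Unitization.inr P) (fun _ => P) = (2 * n + 1) • Y := by
    unfold BElemF
    simp only [hBpow, one_smul, hBfun, Finset.sum_const, Finset.card_range]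
  have hch : chPB k A P n
      = algebraMap ℚ k (chCoeff n) • BElemF k A (2 * n) (Unitization.inr P) (fun _ => P) := by
    cases n with
    | zero => simp [chPB, chCoeff]
    | succ m => rfl
  rw [hb1, hb2, hch, hB]
  have h2 : (algebraMap ℚ k) (chCoeff (n + 1) / 2)
      = -((2 * (n : k) + 1) * (algebraMap ℚ k) (chCoeff n)) := by
    have hnat : (algebraMap ℚ k) (2 * (n : ℚ) + 1) = 2 * (n : k) + 1 := by
      have h : (2 * (n : ℚ) + 1) = ((2 * n + 1 : ℕ) : ℚ) := by push_cast; ring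
      rw [h, map_natCast]
      push_cast
      ring
    rw [chCoeff_succ, map_neg, map_mul, hnat]
  have h1 : (algebraMap ℚ k) (chCoeff (n + 1)) = 2 * (algebraMap ℚ k) (chCoeff (n + 1) / 2) := by
    rw [← map_ofNat (algebraMap ℚ k) 2, ← map_mul]
    congr 1
    ring
  match_scalars
  · linear_combination h1
  · linear_combination h2
end
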